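/- Let m > 0, 0 < r_ℓ < r_h, and x ≥ 0. Suppose y₁, y₂ ≥ 0 satisfy min{m,y₁} ≤ min{m,y₂}, and p is a protection level with min{m,y₂} ≤ p ≤ m. Then CP_o(p;(x,y₂)) ≥ CP_o(p;(x,y₁)), where CP_o(p;(x,y)) = (min{y,m}·r_h + min{x, (m-p)^+}·r_ℓ) / (min{y,m}·r_h + min{x, (m-y)^+}·r_ℓ). -/
import Mathlib


noncomputable def CPo (m rh rl p x y : ℝ) : ℝ :=
  (min y m * rh + min x (max (m - p) 0) * rl) /
    (min y m * rh + min x (max (m - y) 0) * rl)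

theorem stmt_4 (m rh rl x y₁ y₂ p : ℝ) (hm : 0 < m) (hrl : 0 < rl) (hlh : rl < rh)
    (hx : 0 ≤ x) (hy1 : 0 ≤ y₁) (hy2 : 0 ≤ y₂) (hyy : min m y₁ ≤ min m y₂)
    (hp : min m y₂ ≤ p) (hpm : p ≤ m) :
    CPo m rh rl p x y₁ ≤ CPo m rh rl p x y₂ := by
  have hrh : 0 < rh := hrl.trans hlh
  have hmax : ∀ y : ℝ, max (m - y) 0 = m - min y m := by
    intro y
    rcases le_total y m with h | h
    · rw [min_eq_left h, max_eq_left (by linarith)]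
    · rw [min_eq_right h, max_eq_right (by linarith)]; ring
  unfold CPo
  simp only [hmax]
  rw [show min p m = p from min_eq_left hpm]
  set t1 := min y₁ m with ht1
  set t2 := min y₂ m with ht2
  have htt : t1 ≤ t2 := by rw [ht1, ht2, min_comm y₁ m, min_comm y₂ m]; exact hyy
  have ht1n : 0 ≤ t1 := le_min hy1 hm.le
  have ht2n : 0 ≤ t2 := le_min hy2 hm.le
  have ht2p : t2 ≤ p := by rw [ht2, min_comm]; exact hp
  set b := min x (m - p) with hb
  set c1 := min x (m - t1) with hc1
  set c2 := min x (m - t2) with hc2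
  have hbn : 0 ≤ b := le_min hx (by linarith)
  have hbc2 : b ≤ c2 := min_le_min le_rfl (by linarith)
  have hc21 : c2 ≤ c1 := min_le_min le_rfl (by linarith)
  have hc2n : 0 ≤ c2 := hbn.trans hbc2
  have hD2n : 0 ≤ t2 * rh + c2 * rl := add_nonneg (mul_nonneg ht2n hrh.le) (mul_nonneg hc2n hrl.le)
  rcases le_or_gt (t1 * rh + c1 * rl) 0 with hD1 | hD1
  · have hD1' : t1 * rh + c1 * rl = 0 := le_antisymm hD1 (add_nonneg (mul_nonneg ht1n hrh.le) (mul_nonneg (hbn.trans (hbc2.trans hc21)) hrl.le))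
    rw [hD1', div_zero]
    exact div_nonneg (add_nonneg (mul_nonneg ht2n hrh.le) (mul_nonneg hbn hrl.le)) hD2n
  · have hD2 : 0 < t2 * rh + c2 * rl := by
      rcases lt_or_ge 0 t2 with h | h
      · nlinarith
      · have h2 : t2 = 0 := le_antisymm h ht2n
        have h1 : t1 = 0 := le_antisymm (htt.trans h) ht1n
        have : c2 = c1 := by rw [hc1, hc2, h1, h2]
        rw [h2, this]; rw [h1] at hD1; linarith
    rw [div_le_div_iff₀ hD1 hD2]
    have key : t1 * (c2 - b) ≤ t2 * (c1 - b) :=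
      mul_le_mul htt (by linarith) (by linarith) ht2n
    have key2 : b * c2 ≤ b * c1 := mul_le_mul_of_nonneg_left hc21 hbn
    nlinarith [mul_pos hrh hrl, mul_pos hrl hrl,
      mul_nonneg (mul_pos hrh hrl).le (sub_nonneg.2 key),
      mul_nonneg (mul_pos hrl hrl).le (sub_nonneg.2 key2)]
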